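/- Let X, Y : Fin n → ℝ be centered, and define A = min_π (1/n)∑_i X_i Y_{π(i)}, B = max_π (1/n)∑_i X_i Y_{π(i)}, and σ² = Var_π((1/n)∑_i X_i Y_{π(i)}) the variance under a uniformly random permutation π. If X and Y are not identically zero, then A < 0 < B and σ² ≤ −A·B. -/

import Mathlib

open Finset

/-- For each index `i`, summing `Y (π i)` over all permutations gives zero,
when `Y` is centered. -/
lemma aux_sum_perm_apply_zero (n : ℕ) (hn : 0 < n) (Y : Fin n → ℝ)
    (hY : ∑ i, Y i = 0) (i : Fin n) :
    ∑ π : Equiv.Perm (Fin n), Y (π i) = 0 := by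
  have hconst : ∀ j : Fin n, (∑ π : Equiv.Perm (Fin n), Y (π j)) =
      ∑ π : Equiv.Perm (Fin n), Y (π i) := by
    intro j
    calc ∑ π : Equiv.Perm (Fin n), Y (π j)
        = ∑ π : Equiv.Perm (Fin n), Y ((Equiv.mulRight (Equiv.swap i j) π) i) := by
          apply Finset.sum_congr rfl
          intro π _
          simp [Equiv.Perm.mul_apply, Equiv.swap_apply_left]
      _ = ∑ π : Equiv.Perm (Fin n), Y (π i) :=
          Equiv.sum_comp (Equiv.mulRight (Equiv.swap i j)) (fun π => Y (π i))
  have htot : ∑ j : Fin n, ∑ π : Equiv.Perm (Fin n), Y (π j) = 0 := by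
    rw [Finset.sum_comm]
    have : ∀ π : Equiv.Perm (Fin n), ∑ j : Fin n, Y (π j) = 0 := by
      intro π
      rw [Equiv.sum_comp π Y]
      exact hY
    simp [this]
  have h2 : (n : ℝ) * ∑ π : Equiv.Perm (Fin n), Y (π i) = 0 := by
    calc (n : ℝ) * ∑ π : Equiv.Perm (Fin n), Y (π i)
        = ∑ j : Fin n, ∑ π : Equiv.Perm (Fin n), Y (π j) := by
          rw [Finset.sum_congr rfl (fun j _ => hconst j)]
          simp [mul_comm]
      _ = 0 := htot
  have hn' : (n : ℝ) ≠ 0 := by positivity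
  exact (mul_eq_zero.1 h2).resolve_left hn'

/-- Given two pairs of distinct points, there is a permutation sending one pair to the other. -/
lemma aux_exists_perm {α : Type*} [DecidableEq α] {a b c d : α} (hab : a ≠ b) (hcd : c ≠ d) :
    ∃ π : Equiv.Perm α, π a = c ∧ π b = d := by
  set b' := Equiv.swap a c b with hb'
  have hb'c : b' ≠ c := by
    intro h
    apply hab
    exact (Equiv.swap a c).injective ((Equiv.swap_apply_left a c).trans h.symm)
  refine ⟨Equiv.swap b' d * Equiv.swap a c, ?_, ?_⟩
  · rw [Equiv.Perm.mul_apply, Equiv.swap_apply_left]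
    exact Equiv.swap_apply_of_ne_of_ne (Ne.symm hb'c) hcd
  · rw [Equiv.Perm.mul_apply, ← hb', Equiv.swap_apply_left]

theorem stmt_11 (n : ℕ) (hn : 2 ≤ n) (X Y : Fin n → ℝ)
    (hX : ∑ i, X i = 0) (hY : ∑ i, Y i = 0)
    (hX0 : X ≠ 0) (hY0 : Y ≠ 0) (A B σ2 : ℝ)
    (hA : IsLeast (Set.range fun π : Equiv.Perm (Fin n) =>
            (1 / (n : ℝ)) * ∑ i, X i * Y (π i)) A)
    (hB : IsGreatest (Set.range fun π : Equiv.Perm (Fin n) =>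
            (1 / (n : ℝ)) * ∑ i, X i * Y (π i)) B)
    (hσ2 : σ2 = (∑ π : Equiv.Perm (Fin n),
        (((1 / (n : ℝ)) * ∑ i, X i * Y (π i))
          - (∑ σ : Equiv.Perm (Fin n), (1 / (n : ℝ)) * ∑ i, X i * Y (σ i))
              / (Nat.factorial n : ℝ)) ^ 2) / (Nat.factorial n : ℝ)) :
    A < 0 ∧ 0 < B ∧ σ2 ≤ -(A * B) := by
  have hnpos : 0 < n := by omega
  have hnR : (0:ℝ) < n := by exact_mod_cast hnpos
  set f : Equiv.Perm (Fin n) → ℝ := fun π => (1 / (n : ℝ)) * ∑ i, X i * Y (π i) with hfdef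
  -- the mean over permutations is zero
  have hsum0 : ∑ π : Equiv.Perm (Fin n), f π = 0 := by
    have : ∑ π : Equiv.Perm (Fin n), ∑ i : Fin n, X i * Y (π i) = 0 := by
      rw [Finset.sum_comm]
      have : ∀ i : Fin n, ∑ π : Equiv.Perm (Fin n), X i * Y (π i) = 0 := by
        intro i
        rw [← Finset.mul_sum, aux_sum_perm_apply_zero n hnpos Y hY i, mul_zero]
      simp [this]
    simp only [hfdef, ← Finset.mul_sum, this, mul_zero]
  -- f is not identically zero
  have hex : ∃ π : Equiv.Perm (Fin n), f π ≠ 0 := by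
    by_contra hcon
    push_neg at hcon
    have hzero : ∀ π : Equiv.Perm (Fin n), ∑ i, X i * Y (π i) = 0 := by
      intro π
      have := hcon π
      simp only [hfdef] at this
      have h1 : (1 / (n:ℝ)) ≠ 0 := by positivity
      exact (mul_eq_zero.1 this).resolve_left h1
    -- pair identity
    have hpair : ∀ (π : Equiv.Perm (Fin n)) (a b : Fin n), a ≠ b →
        (X a - X b) * (Y (π a) - Y (π b)) = 0 := by
      intro π a b hab
      have h1 := hzero π
      have h2 := hzero (π * Equiv.swap a b)
      simp only [Equiv.Perm.mul_apply] at h2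
      have h3 : ∑ i ∈ ({a, b} : Finset (Fin n)),
          (X i * Y (π i) - X i * Y (π (Equiv.swap a b i))) = 0 := by
        rw [Finset.sum_subset (Finset.subset_univ {a, b})]
        · rw [Finset.sum_sub_distrib, h1, h2, sub_zero]
        · intro x _ hx
          simp only [Finset.mem_insert, Finset.mem_singleton, not_or] at hx
          rw [Equiv.swap_apply_of_ne_of_ne hx.1 hx.2, sub_self]
      rw [Finset.sum_pair hab, Equiv.swap_apply_left, Equiv.swap_apply_right] at h3
      linear_combination h3
    -- X is non-constant
    obtain ⟨a, ha⟩ : ∃ a, X a ≠ 0 := Function.ne_iff.1 hX0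
    obtain ⟨b, hb⟩ : ∃ b, X b ≠ X a := by
      by_contra hc
      push_neg at hc
      have : ∑ i : Fin n, X i = (n : ℝ) * X a := by
        rw [Finset.sum_congr rfl (fun i _ => hc i)]
        simp [mul_comm]
      rw [this] at hX
      exact ha ((mul_eq_zero.1 hX).resolve_left (ne_of_gt hnR))
    have hab : a ≠ b := fun h => hb (h ▸ rfl)
    have hYab : ∀ π : Equiv.Perm (Fin n), Y (π a) = Y (π b) := by
      intro π
      have := hpair π a b hab
      rcases mul_eq_zero.1 this with h | h
      · exact absurd (by linarith [sub_eq_zero.1 h] : X a = X b) (fun h' => hb h'.symm)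
      · linarith [sub_eq_zero.1 h]
    -- hence Y is constant
    have hYconst : ∀ c d : Fin n, Y c = Y d := by
      intro c d
      rcases eq_or_ne c d with h | h
      · rw [h]
      · obtain ⟨π, hπ1, hπ2⟩ := aux_exists_perm hab h
        have := hYab π
        rw [hπ1, hπ2] at this
        exact this
    have i0 : Fin n := ⟨0, hnpos⟩
    have : ∑ i : Fin n, Y i = (n : ℝ) * Y i0 := by
      rw [Finset.sum_congr rfl (fun i _ => hYconst i i0)]
      simp [mul_comm]
    rw [this] at hY
    have hYi0 : Y i0 = 0 := (mul_eq_zero.1 hY).resolve_left (ne_of_gt hnR)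
    apply hY0
    funext i
    rw [hYconst i i0, hYi0]
    rfl
  -- existence of strictly negative and strictly positive values
  obtain ⟨π0, hπ0⟩ := hex
  have hexneg : ∃ π, f π < 0 := by
    by_contra hc
    push_neg at hc
    have hlt : (0:ℝ) < ∑ π : Equiv.Perm (Fin n), f π := by
      have h1 : 0 < f π0 := lt_of_le_of_ne (hc π0) (Ne.symm hπ0)
      calc (0:ℝ) < f π0 := h1
        _ ≤ ∑ π : Equiv.Perm (Fin n), f π :=
          Finset.single_le_sum (fun π _ => hc π) (Finset.mem_univ π0)
    rw [hsum0] at hlt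
    exact lt_irrefl _ hlt
  have hexpos : ∃ π, 0 < f π := by
    by_contra hc
    push_neg at hc
    obtain ⟨π1, hπ1⟩ := hexneg
    have hlt : ∑ π : Equiv.Perm (Fin n), f π < 0 := by
      calc ∑ π : Equiv.Perm (Fin n), f π
          ≤ f π1 + ∑ π ∈ Finset.univ.erase π1, f π := by
            rw [Finset.add_sum_erase _ f (Finset.mem_univ π1)]
        _ ≤ f π1 + 0 := by
            gcongr
            exact Finset.sum_nonpos (fun π _ => hc π)
        _ < 0 := by linarith
    rw [hsum0] at hlt
    exact lt_irrefl _ hlt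
  obtain ⟨πm, hπm⟩ := hexneg
  obtain ⟨πp, hπp⟩ := hexpos
  have hlow : ∀ π : Equiv.Perm (Fin n), A ≤ f π := fun π => hA.2 ⟨π, rfl⟩
  have hup : ∀ π : Equiv.Perm (Fin n), f π ≤ B := fun π => hB.2 ⟨π, rfl⟩
  have hA0 : A < 0 := lt_of_le_of_lt (hlow πm) hπm
  have hB0 : 0 < B := lt_of_lt_of_le hπp (hup πp)
  refine ⟨hA0, hB0, ?_⟩
  -- Bhatia–Davis
  have hfac : (0:ℝ) < (Nat.factorial n : ℝ) := by
    exact_mod_cast Nat.factorial_pos n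
  have hσ2' : σ2 = (∑ π : Equiv.Perm (Fin n), f π ^ 2) / (Nat.factorial n : ℝ) := by
    rw [hσ2, hsum0, zero_div]
    simp only [sub_zero]
    rfl
  have hcard : (Finset.univ : Finset (Equiv.Perm (Fin n))).card = Nat.factorial n := by
    rw [← Fintype.card, Fintype.card_perm, Fintype.card_fin]
  have hkey : ∀ π : Equiv.Perm (Fin n), f π ^ 2 ≤ (A + B) * f π - A * B := by
    intro π
    nlinarith [mul_nonneg (sub_nonneg.2 (hlow π)) (sub_nonneg.2 (hup π))]
  have hsumle : ∑ π : Equiv.Perm (Fin n), f π ^ 2 ≤ (Nat.factorial n : ℝ) * (-(A * B)) := by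
    calc ∑ π : Equiv.Perm (Fin n), f π ^ 2
        ≤ ∑ π : Equiv.Perm (Fin n), ((A + B) * f π - A * B) :=
          Finset.sum_le_sum (fun π _ => hkey π)
      _ = (A + B) * ∑ π : Equiv.Perm (Fin n), f π
            - (Finset.univ : Finset (Equiv.Perm (Fin n))).card * (A * B) := by
          rw [Finset.sum_sub_distrib, ← Finset.mul_sum, Finset.sum_const, nsmul_eq_mul]
      _ = (Nat.factorial n : ℝ) * (-(A * B)) := by
          rw [hsum0, hcard]
          ring
  rw [hσ2']
  rw [div_le_iff₀ hfac]
  calc ∑ π : Equiv.Perm (Fin n), f π ^ 2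
      ≤ (Nat.factorial n : ℝ) * (-(A * B)) := hsumle
    _ = -(A * B) * (Nat.factorial n : ℝ) := by ring
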